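/- arXiv:1307.2200 — 3 statements merged into one kernel-verified Lean document; each statement's English description precedes it below -/
import Mathlib

section
/- Let V be a type of nodes, h : V → ℝ a heuristic function, ω a real number, and let x₁, x₂, …, x_ℓ (ℓ ≥ 1) be a cheapest path from the node x = x₁ to a solution node x_ℓ, with positive edge costs c₁, …, c_{ℓ−1} ∈ ℝ (cᵢ being the cost of the edge (xᵢ, x_{i+1})), so that the cheapest cost-to-go satisfies h*(x) = Σ_{i=1}^{ℓ−1} cᵢ. Assume h(x_ℓ) = 0 and that the weighted inconsistency rate along every edge of this path is at most ω, i.e., h(xᵢ) − h(x_{i+1}) ≤ ω·cᵢ for each i = 1, …, ℓ−1. Then h(x) ≤ ω·h*(x). -/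
/-- **Theorem 1 (path-wise core).** Let `x 0, x 1, …, x (ℓ-1)` (with `ℓ ≥ 1`) be a
cheapest path from the node `x 0` to a solution node `x (ℓ-1)`, with positive edge
costs `c i > 0` for `i = 0, …, ℓ-2` (cost of edge `(x i, x (i+1))`), so that
`h* (x 0) = ∑_{i<ℓ-1} c i`.  If `h (x (ℓ-1)) = 0` and the weighted inconsistency rate
along every edge of the path is at most `ω`, i.e. `h (x i) - h (x (i+1)) ≤ ω * c i`,
then `h (x 0) ≤ ω * h* (x 0)`. -/
theorem heuristic_accuracy_le_inconsistency
    {V : Type*} (h : V → ℝ) (ω : ℝ) (ℓ : ℕ) (hℓ : 1 ≤ ℓ)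
    (x : ℕ → V) (c : ℕ → ℝ)
    (hc : ∀ i, i < ℓ - 1 → 0 < c i)
    (hsol : h (x (ℓ - 1)) = 0)
    (hWI : ∀ i, i < ℓ - 1 → h (x i) - h (x (i + 1)) ≤ ω * c i)
    (hstar : ℝ) (hstar_def : hstar = ∑ i ∈ Finset.range (ℓ - 1), c i) :
    h (x 0) ≤ ω * hstar := by
  have key : h (x 0) - h (x (ℓ - 1)) = ∑ i ∈ Finset.range (ℓ - 1), (h (x i) - h (x (i + 1))) :=
    (Finset.sum_range_sub' (fun i => h (x i)) (ℓ - 1)).symm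
  have hle : ∑ i ∈ Finset.range (ℓ - 1), (h (x i) - h (x (i + 1))) ≤
      ∑ i ∈ Finset.range (ℓ - 1), ω * c i :=
    Finset.sum_le_sum fun i hi => hWI i (Finset.mem_range.mp hi)
  calc h (x 0) = h (x 0) - h (x (ℓ - 1)) := by rw [hsol]; ring
    _ = ∑ i ∈ Finset.range (ℓ - 1), (h (x i) - h (x (i + 1))) := key
    _ ≤ ∑ i ∈ Finset.range (ℓ - 1), ω * c i := hle
    _ = ω * hstar := by rw [hstar_def, Finset.mul_sum]
end

section
/- Let p and Opt be integers with Opt ≥ 1, and let γ be a real number with 0 < γ < 1/Opt. Suppose A is a real number satisfying (1 − γ)·Opt ≤ A ≤ Opt. Then ⌊p − A⌋ = p − Opt. -/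
/-- **Proposition.** If `Opt ≥ 1` is an integer, `0 < γ < 1/Opt`, and the FPTAS value
`A` satisfies `(1 - γ) * Opt ≤ A ≤ Opt`, then `⌊p - A⌋ = p - Opt`. -/
theorem floor_profit_sub_fptas_eq (p Opt : ℤ) (hOpt : 1 ≤ Opt)
    (γ : ℝ) (hγ0 : 0 < γ) (hγ1 : γ < 1 / (Opt : ℝ))
    (A : ℝ) (hA1 : (1 - γ) * (Opt : ℝ) ≤ A) (hA2 : A ≤ (Opt : ℝ)) :
    ⌊(p : ℝ) - A⌋ = p - Opt := by
  have hOptR : (1 : ℝ) ≤ (Opt : ℝ) := by exact_mod_cast hOpt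
  have hOptpos : (0 : ℝ) < (Opt : ℝ) := by linarith
  have hγOpt : γ * (Opt : ℝ) < 1 := by
    have := (lt_div_iff₀ hOptpos).mp hγ1
    linarith
  have hA3 : (Opt : ℝ) - 1 < A := by nlinarith
  rw [Int.floor_eq_iff]
  constructor
  · push_cast; linarith
  · push_cast; linarith
end

section
/- Let α be a type of items with positive profit function p : α → ℤ>0 and weight function w : α → ℤ>0, let C > 0 be a capacity, and let X be a nonempty finite set of items that contains at least one nonempty subset Y ⊆ X with w(Y) ≤ C. In the Knapsack search graph (nodes are nonempty finite sets of items, with an edge of cost p(i) from a set Z to Z \ {i} for each i ∈ Z with Z \ {i} nonempty, and solutions are the nonempty sets Y with w(Y) ≤ C), the minimum total cost over all paths from X to a solution node equals p(X) − Opt(X), where Opt(X) = max{ p(Y) : ∅ ≠ Y ⊆ X, w(Y) ≤ C } and p(X), p(Y) denote total profits. That is, h*(X) = p(X) − Opt(X). -/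
private lemma knapsack_telescope {α : Type*} [DecidableEq α] (p : α → ℤ)
    (f : ℕ → Finset α) (i : ℕ → α) (k : ℕ)
    (h : ∀ j, j < k → i j ∈ f j ∧ f (j + 1) = (f j).erase (i j)) :
    ∑ j ∈ Finset.range k, p (i j) = (∑ a ∈ f 0, p a) - ∑ a ∈ f k, p a := by
  induction k with
  | zero => simp
  | succ k ih =>
    rw [Finset.sum_range_succ, ih (fun j hj => h j (Nat.lt_succ_of_lt hj))]
    obtain ⟨hm, he⟩ := h k (Nat.lt_succ_self k)
    rw [he, Finset.sum_erase_eq_sub hm]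
    ring

private lemma knapsack_not_mem_take {α : Type*} {l : List α} (hnd : l.Nodup)
    {j : ℕ} (hj : j < l.length) : l[j] ∉ l.take j := by
  intro hc
  obtain ⟨m, hm, hme⟩ := List.getElem_of_mem hc
  have hmj : m < j := by
    have := hm
    simp [List.length_take] at this
    omega
  have hml : m < l.length := lt_trans hmj hj
  rw [List.getElem_take] at hme
  have : m = j := (List.Nodup.getElem_inj_iff hnd).mp hme
  omega

/-- The step structure of the canonical path `f j = X \ (l.take j).toFinset`,
where `l` lists the elements to remove. -/
private lemma knapsack_path_step {α : Type*} [DecidableEq α] (X : Finset α)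
    (l : List α) (hnd : l.Nodup) (hlX : l.toFinset ⊆ X)
    {j : ℕ} (hj : j < l.length) :
    l[j] ∈ X \ (l.take j).toFinset ∧
      X \ (l.take (j + 1)).toFinset = (X \ (l.take j).toFinset).erase l[j] := by
  constructor
  · rw [Finset.mem_sdiff]
    exact ⟨hlX (List.mem_toFinset.2 (List.getElem_mem _)),
      fun hc => knapsack_not_mem_take hnd hj (List.mem_toFinset.1 hc)⟩
  · have htake : l.take (j + 1) = l.take j ++ [l[j]] := by rw [← List.take_concat_get hj, List.concat_eq_append]
    rw [htake]
    ext x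
    simp only [Finset.mem_sdiff, Finset.mem_erase, List.mem_toFinset, List.mem_append,
      List.mem_singleton]
    tauto

/-- **`h*(X) = p(X) − Opt(X)` in the Knapsack search space.** Nodes of the Knapsack
search graph are nonempty finite sets of items; from a node `Z` there is an edge of
cost `p i` to `Z.erase i` for each `i ∈ Z` with `Z.erase i` nonempty; a node `Y` is a
solution if `w Y ≤ C`.  For a node `X` containing at least one nonempty feasible
subset, the minimum total cost over all paths from `X` to a solution node equals
`p X - Opt X`, where `Opt X` is the maximal total profit of a nonempty subset
`Y ⊆ X` with `w Y ≤ C`. -/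
theorem knapsack_hstar_eq_profit_sub_opt
    {α : Type*} [DecidableEq α] (p w : α → ℤ) (C : ℤ)
    (hp : ∀ a, 0 < p a) (hw : ∀ a, 0 < w a) (hC : 0 < C)
    (X : Finset α) (hX : X.Nonempty)
    (feas : Finset (Finset α))
    (hfeas : feas = X.powerset.filter (fun Y => Y.Nonempty ∧ ∑ a ∈ Y, w a ≤ C))
    (hfeas_ne : feas.Nonempty)
    (Opt : ℤ) (hOpt : Opt = feas.sup' hfeas_ne (fun Y => ∑ a ∈ Y, p a)) :
    IsLeast
      { t : ℤ | ∃ (k : ℕ) (f : ℕ → Finset α) (i : ℕ → α),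
          f 0 = X ∧
          (∀ j, j < k →
            i j ∈ f j ∧ f (j + 1) = (f j).erase (i j) ∧ (f (j + 1)).Nonempty) ∧
          (f k).Nonempty ∧ (∑ a ∈ f k, w a) ≤ C ∧
          t = ∑ j ∈ Finset.range k, p (i j) }
      ((∑ a ∈ X, p a) - Opt) := by
  constructor
  · -- membership: build a path from X to an optimal feasible subset Y
    obtain ⟨Y, hYfeas, hYopt⟩ := Finset.exists_mem_eq_sup' hfeas_ne
      (fun Y => ∑ a ∈ Y, p a)
    rw [hfeas, Finset.mem_filter, Finset.mem_powerset] at hYfeas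
    obtain ⟨hYX, hYne, hYw⟩ := hYfeas
    obtain ⟨l, hl⟩ : ∃ l : List α, l = (X \ Y).toList := ⟨_, rfl⟩
    have hlnd : l.Nodup := hl ▸ Finset.nodup_toList _
    have hltf : l.toFinset = X \ Y := hl ▸ Finset.toList_toFinset _
    have hlX : l.toFinset ⊆ X := hltf ▸ Finset.sdiff_subset
    obtain ⟨k, hk⟩ : ∃ k : ℕ, k = l.length := ⟨_, rfl⟩
    have hYsub : ∀ m, Y ⊆ X \ (l.take m).toFinset := by
      intro m y hy
      rw [Finset.mem_sdiff]
      refine ⟨hYX hy, fun hc => ?_⟩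
      have : y ∈ X \ Y := by
        rw [← hltf]
        exact List.mem_toFinset.2 (List.take_subset _ _ (List.mem_toFinset.1 hc))
      exact (Finset.mem_sdiff.1 this).2 hy
    have hfk : X \ (l.take k).toFinset = Y := by
      rw [hk, List.take_length, hltf, Finset.sdiff_sdiff_eq_self hYX]
    refine ⟨k, fun j => X \ (l.take j).toFinset,
      fun j => if h : j < l.length then l[j] else hX.choose, ?_, ?_, ?_, ?_, ?_⟩
    · simp
    · intro j hj
      have hjl : j < l.length := hk ▸ hj
      dsimp only
      rw [dif_pos hjl]
      obtain ⟨h1, h2⟩ := knapsack_path_step X l hlnd hlX hjl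
      exact ⟨h1, h2, (hYne.mono (hYsub (j + 1)))⟩
    · dsimp only
      rw [hfk]
      exact hYne
    · dsimp only
      rw [hfk]
      exact hYw
    · rw [knapsack_telescope p (fun j => X \ (l.take j).toFinset)
        (fun j => if h : j < l.length then l[j] else hX.choose) k (fun j hj => ?_)]
      · show (∑ a ∈ X, p a) - Opt = (∑ a ∈ X \ (l.take 0).toFinset, p a) - ∑ a ∈ X \ (l.take k).toFinset, p a
        rw [hfk]
        simp [hOpt, ← hYopt]
      · have hjl : j < l.length := hk ▸ hj
        beta_reduce
        rw [dif_pos hjl]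
        exact knapsack_path_step X l hlnd hlX hjl
  · -- lower bound
    rintro t ⟨k, f, i, hf0, hstep, hne, hwk, ht⟩
    have hsub : ∀ j, j ≤ k → f j ⊆ X := by
      intro j
      induction j with
      | zero => intro _; rw [hf0]
      | succ j ih =>
        intro hjk
        have hj : j < k := Nat.lt_of_succ_le hjk
        rw [(hstep j hj).2.1]
        exact (Finset.erase_subset _ _).trans (ih (Nat.le_of_lt hj))
    have hfeask : f k ∈ feas := by
      rw [hfeas, Finset.mem_filter, Finset.mem_powerset]
      exact ⟨hsub k le_rfl, hne, hwk⟩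
    have hle : (∑ a ∈ f k, p a) ≤ Opt := by
      rw [hOpt]
      exact Finset.le_sup' (fun Y => ∑ a ∈ Y, p a) hfeask
    rw [ht, knapsack_telescope p f i k
      (fun j hj => ⟨(hstep j hj).1, (hstep j hj).2.1⟩), hf0]
    linarith
end
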